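/- Let H be a symmetric real m×m matrix, J an arbitrary real m×m matrix, and ω ∈ ℝᵐ, and define φ(ε) := ω ⬝ᵥ ((H·(1 + ε·H)⁻¹ + Jᵀ·H·(1 + ε·H)⁻¹·J).mulVec ω). If the derivative of φ at ε = 0 vanishes, then H.mulVec ω = 0 and H.mulVec (J.mulVec ω) = 0. -/

import Mathlib

/-!
STATEMENT 3 (equation (9) of the paper): with φ(ε) := ω ⬝ᵥ ((H·(1+εH)⁻¹ + Jᵀ·H·(1+εH)⁻¹·J).mulVec ω),
H symmetric, if the derivative of φ at ε = 0 vanishes then H ω = 0 and H (J ω) = 0.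
-/

open Matrix

attribute [local instance] Matrix.linftyOpNormedRing Matrix.linftyOpNormedAlgebra

private lemma dp_self_nonneg {m : ℕ} (v : Fin m → ℝ) : 0 ≤ v ⬝ᵥ v :=
  Finset.sum_nonneg fun i _ => mul_self_nonneg (v i)

theorem hessian_annihilates_null_directions {m : ℕ}
    (H J : Matrix (Fin m) (Fin m) ℝ) (hH : H.IsSymm) (ω : Fin m → ℝ)
    (hderiv : deriv
      (fun ε : ℝ => ω ⬝ᵥ ((H * (1 + ε • H)⁻¹ + Jᵀ * H * (1 + ε • H)⁻¹ * J).mulVec ω)) 0 = 0) :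
    H.mulVec ω = 0 ∧ H.mulVec (J.mulVec ω) = 0 := by
  classical
  have hsym : Hᵀ = H := hH
  have h1 : HasDerivAt (fun ε : ℝ => 1 + ε • H) H 0 := by
    have h := ((hasDerivAt_id (0:ℝ)).smul_const H).const_add (1 : Matrix (Fin m) (Fin m) ℝ)
    simp only [id_eq, one_smul] at h
    exact h
  have h2 := hasFDerivAt_ringInverse (𝕜 := ℝ) (1 : (Matrix (Fin m) (Fin m) ℝ)ˣ)
  have h2' : HasFDerivAt Ring.inverse
      (-((ContinuousLinearMap.mulLeftRight ℝ (Matrix (Fin m) (Fin m) ℝ))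
        (((1:(Matrix (Fin m) (Fin m) ℝ)ˣ):Matrix (Fin m) (Fin m) ℝ))⁻¹)
        (((1:(Matrix (Fin m) (Fin m) ℝ)ˣ):Matrix (Fin m) (Fin m) ℝ))⁻¹)
      (1 + (0:ℝ) • H) := by simpa using h2
  have hinv : HasDerivAt (fun ε : ℝ => Ring.inverse (1 + ε • H)) (-H) 0 := by
    have h := h2'.comp_hasDerivAt 0 h1
    simp [Function.comp_def] at h
    exact h
  let L : Matrix (Fin m) (Fin m) ℝ →ₗ[ℝ] ℝ :=
    { toFun := fun X => ω ⬝ᵥ ((H * X + Jᵀ * H * X * J).mulVec ω)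
      map_add' := by
        intro X Y
        simp only [Matrix.mul_add, Matrix.add_mul, Matrix.add_mulVec, dotProduct_add]
        ring
      map_smul' := by
        intro c X
        simp only [Matrix.mul_smul, Matrix.smul_mul, ← smul_add, smul_mulVec,
          dotProduct_smul, smul_eq_mul, RingHom.id_apply] }
  have hφ : HasDerivAt
      (fun ε : ℝ => ω ⬝ᵥ ((H * (1 + ε • H)⁻¹ + Jᵀ * H * (1 + ε • H)⁻¹ * J).mulVec ω))
      (L.toContinuousLinearMap (-H)) 0 := by
    have hc := (L.toContinuousLinearMap.hasFDerivAt
      (x := Ring.inverse (1 + (0:ℝ) • H))).comp_hasDerivAt 0 hinv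
    have heq : (fun ε : ℝ => ω ⬝ᵥ ((H * (1 + ε • H)⁻¹ + Jᵀ * H * (1 + ε • H)⁻¹ * J).mulVec ω))
        = ⇑L.toContinuousLinearMap ∘ (fun ε : ℝ => Ring.inverse (1 + ε • H)) := by
      funext ε
      simp [L, Matrix.nonsing_inv_eq_ringInverse]
    rw [heq]
    exact hc
  have hL : L.toContinuousLinearMap (-H) = 0 := by rw [← hφ.deriv]; exact hderiv
  have hvm : ∀ v : Fin m → ℝ, v ᵥ* H = H.mulVec v := by
    intro v
    conv_lhs => rw [← hsym]
    rw [Matrix.vecMul_transpose]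
  have e1 : ω ⬝ᵥ (H * H).mulVec ω = H.mulVec ω ⬝ᵥ H.mulVec ω := by
    rw [← Matrix.mulVec_mulVec, Matrix.dotProduct_mulVec, hvm]
  have e2 : ω ⬝ᵥ (Jᵀ * H * H * J).mulVec ω
      = H.mulVec (J.mulVec ω) ⬝ᵥ H.mulVec (J.mulVec ω) := by
    have : Jᵀ * H * H * J = Jᵀ * (H * (H * J)) := by
      simp only [Matrix.mul_assoc]
    rw [this, ← Matrix.mulVec_mulVec, ← Matrix.mulVec_mulVec, ← Matrix.mulVec_mulVec,
      Matrix.dotProduct_mulVec ω Jᵀ, Matrix.vecMul_transpose,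
      Matrix.dotProduct_mulVec _ H, hvm]
  have hexp : L.toContinuousLinearMap (-H)
      = -(H.mulVec ω ⬝ᵥ H.mulVec ω + H.mulVec (J.mulVec ω) ⬝ᵥ H.mulVec (J.mulVec ω)) := by
    have : L.toContinuousLinearMap (-H) = -(L H) := by simp
    rw [this]
    simp only [L, LinearMap.coe_mk, AddHom.coe_mk, Matrix.add_mulVec, dotProduct_add, e1, e2]
  rw [hexp, neg_eq_zero] at hL
  have n1 := dp_self_nonneg (H.mulVec ω)
  have n2 := dp_self_nonneg (H.mulVec (J.mulVec ω))
  refine ⟨dotProduct_self_eq_zero.mp ?_, dotProduct_self_eq_zero.mp ?_⟩ <;> linarith
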